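/- Let H be a graph (or ordered graph) and d > 0 a weak viral exponent for {H}: for every ε ∈ (0,1/2) and every graph G with ind_H(G) ≤ (ε^d|G|)^{|H|}, there exists S ⊆ V(G) with |S| ≥ ε^d|G| such that one of G[S], its complement, has at most ε·(|S| choose 2) edges. Then 3d is a viral exponent for {H}: for every ε ∈ (0,1/2) and every G with ind_H(G) ≤ (ε^{3d}|G|)^{|H|}, there is an ε-restricted S ⊆ V(G) with |S| ≥ ε^{3d}|G|. -/

import Mathlib

/-- Number of neighbours of `v` inside the set `S`. -/
noncomputable def degIn {V : Type*} (G : SimpleGraph V) (S : Set V) (v : V) : ℕ :=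
  Nat.card {u : V // u ∈ S ∧ G.Adj v u}

/-- `S` is `ε`-restricted in `G`: one of `G[S]`, its complement, has maximum degree
at most `ε·|S|`. -/
def EpsRestricted {V : Type*} (G : SimpleGraph V) (S : Finset V) (ε : ℝ) : Prop :=
  (∀ v ∈ S, (degIn G (↑S) v : ℝ) ≤ ε * S.card) ∨
    (∀ v ∈ S, (degIn Gᶜ (↑S) v : ℝ) ≤ ε * S.card)

/-- `f` is a copy of `H` in `G`. -/
def IsCopy {W V : Type*} (H : SimpleGraph W) (G : SimpleGraph V) (f : W → V) : Prop :=
  Function.Injective f ∧ ∀ a b, G.Adj (f a) (f b) ↔ H.Adj a b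

/-- The number of copies of `H` in `G`. -/
noncomputable def ind {W V : Type*} (H : SimpleGraph W) (G : SimpleGraph V) : ℕ :=
  Nat.card {f : W → V // IsCopy H G f}

/-- Ordered adjacent pairs inside `A × B` (an edge within a set is counted twice). -/
noncomputable def ePairs {V : Type*} (G : SimpleGraph V) (A B : Set V) : ℕ :=
  Nat.card {p : V × V // p.1 ∈ A ∧ p.2 ∈ B ∧ G.Adj p.1 p.2}

open scoped Classical

section Bridges

variable {V : Type*} [Fintype V]

lemma degIn_eq (G : SimpleGraph V) (S : Finset V) (v : V) :
    degIn G (↑S) v = (S.filter (fun u => G.Adj v u)).card := by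
  rw [degIn, Nat.card_eq_fintype_card, Fintype.card_subtype]
  congr 1; ext u; simp

lemma ePairs_eq (G : SimpleGraph V) (S : Finset V) :
    ePairs G (↑S) (↑S) = ((S ×ˢ S).filter (fun p => G.Adj p.1 p.2)).card := by
  rw [ePairs, Nat.card_eq_fintype_card, Fintype.card_subtype]
  congr 1; ext ⟨x, y⟩; simp [Finset.mem_product, and_assoc]

lemma ePairs_sum (G : SimpleGraph V) (S : Finset V) :
    ePairs G (↑S) (↑S) = ∑ x ∈ S, (S.filter (fun u => G.Adj x u)).card := by
  rw [ePairs_eq, Finset.card_filter, Finset.sum_product]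
  refine Finset.sum_congr rfl fun x _ => ?_
  rw [Finset.card_filter]

lemma ePairs_erase (G : SimpleGraph V) (S : Finset V) (v : V) (hv : v ∈ S) :
    ePairs G (↑S) (↑S) = ePairs G (↑(S.erase v)) (↑(S.erase v)) + 2 * degIn G (↑S) v := by
  have hdv : degIn G (↑(S.erase v)) v = degIn G (↑S) v := by
    rw [degIn_eq, degIn_eq, Finset.filter_erase,
      Finset.erase_eq_of_notMem (by simp [SimpleGraph.irrefl])]
  rw [ePairs_sum, ePairs_sum, ← Finset.add_sum_erase _ _ hv]
  have hstep : ∀ x ∈ S.erase v,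
      (S.filter (fun u => G.Adj x u)).card
        = ((S.erase v).filter (fun u => G.Adj x u)).card + (if G.Adj x v then 1 else 0) := by
    intro x hx
    rw [Finset.filter_erase]
    by_cases h : G.Adj x v
    · rw [Finset.card_erase_of_mem (by simp [hv, h]), if_pos h]
      have : 0 < (S.filter (fun u => G.Adj x u)).card := Finset.card_pos.2 ⟨v, by simp [hv, h]⟩
      omega
    · rw [Finset.erase_eq_of_notMem (by simp [h]), if_neg h]
      omega
  rw [Finset.sum_congr rfl hstep, Finset.sum_add_distrib]
  have hlast : (∑ x ∈ S.erase v, if G.Adj x v then 1 else 0) = degIn G (↑S) v := by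
    rw [← hdv, degIn_eq, Finset.card_filter]
    refine Finset.sum_congr rfl fun x _ => ?_
    simp [G.adj_comm]
  rw [hlast, ← degIn_eq, degIn_eq G S v, ← degIn_eq]
  omega

end Bridges

/-- Greedy deletion of high-degree vertices, with the edge accounting needed
to bound the number of removed vertices. -/
lemma greedy {n : ℕ} (G : SimpleGraph (Fin n)) (ε : ℝ) (hε : 0 ≤ ε) (S : Finset (Fin n)) :
    ∃ T, T ⊆ S ∧ (∀ v ∈ T, (degIn G (↑T) v : ℝ) ≤ ε * T.card) ∧
      ε * ((S.card : ℝ)^2 - (T.card : ℝ)^2) ≤ (ePairs G (↑S) (↑S) : ℝ) := by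
  induction S using Finset.strongInduction with
  | _ S ih =>
    by_cases hgood : ∀ v ∈ S, (degIn G (↑S) v : ℝ) ≤ ε * S.card
    · exact ⟨S, le_refl _, hgood, by simp⟩
    · push_neg at hgood
      obtain ⟨v, hv, hbad⟩ := hgood
      obtain ⟨T, hTsub, hTgood, hTineq⟩ := ih (S.erase v) (Finset.erase_ssubset hv)
      refine ⟨T, hTsub.trans (Finset.erase_subset _ _), hTgood, ?_⟩
      have hcount := ePairs_erase G S v hv
      have hcard : (S.erase v).card = S.card - 1 := Finset.card_erase_of_mem hv
      have hSpos : 1 ≤ S.card := Finset.card_pos.2 ⟨v, hv⟩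
      have hcardR : ((S.erase v).card : ℝ) = (S.card : ℝ) - 1 := by
        rw [hcard]; push_cast [hSpos]; ring
      have h2 : (ePairs G (↑S) (↑S) : ℝ)
          = (ePairs G (↑(S.erase v)) (↑(S.erase v)) : ℝ) + 2 * (degIn G (↑S) v : ℝ) := by
        rw [hcount]; push_cast; ring
      rw [h2]
      have : ε * ((S.card : ℝ)^2 - ((S.erase v).card : ℝ)^2) ≤ 2 * (degIn G (↑S) v : ℝ) := by
        rw [hcardR]
        have hb : ε * (S.card : ℝ) ≤ (degIn G (↑S) v : ℝ) := le_of_lt hbad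
        nlinarith [hε, hSpos, (by exact_mod_cast hSpos : (1:ℝ) ≤ (S.card:ℝ))]
      nlinarith [hTineq]

/-- The key size computation for the main (`d ≥ 1/2`) case. -/
lemma key_ineq (ε d : ℝ) (hε : 0 < ε) (hε2 : ε < 1/2) (hd : 1/2 ≤ d) :
    2 * (ε ^ (3*d))^2 ≤ ((ε/2) ^ d)^2 := by
  have h3 : ε ^ (3*d) = (ε^(3:ℝ))^d := by rw [← Real.rpow_mul hε.le]
  have hsq : ε^(2:ℝ) = ε*ε := by
    rw [show (2:ℝ) = ((2:ℕ):ℝ) by norm_num, Real.rpow_natCast]; ring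
  have hx : (2:ℝ) ≤ 1/(2*ε^(2:ℝ)) := by
    rw [hsq, le_div_iff₀ (by nlinarith)]
    nlinarith
  have hsplit : (ε/2) ^ d = (ε^(3:ℝ))^d * (1/(2*ε^(2:ℝ)))^d := by
    rw [← Real.mul_rpow (by positivity) (by positivity)]
    congr 1
    rw [show (3:ℝ) = ((3:ℕ):ℝ) by norm_num, show (2:ℝ) = ((2:ℕ):ℝ) by norm_num,
      Real.rpow_natCast, Real.rpow_natCast]
    field_simp
  have hfac : (2:ℝ) ≤ ((1/(2*ε^(2:ℝ)))^d)^2 := by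
    have e1 : ((1/(2*ε^(2:ℝ)))^d)^2 = (1/(2*ε^(2:ℝ)))^(d*2) := by
      rw [← Real.rpow_natCast ((1/(2*ε^(2:ℝ)))^d) 2, ← Real.rpow_mul (by positivity)]
      norm_num
    rw [e1]
    calc (2:ℝ) = 2^(1:ℝ) := (Real.rpow_one 2).symm
    _ ≤ 2^(d*2) := Real.rpow_le_rpow_of_exponent_le (by norm_num) (by linarith)
    _ ≤ (1/(2*ε^(2:ℝ)))^(d*2) := Real.rpow_le_rpow (by norm_num) hx (by linarith)
  calc 2 * (ε ^ (3*d))^2 = ((ε^(3:ℝ))^d)^2 * 2 := by rw [h3]; ring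
  _ ≤ ((ε^(3:ℝ))^d)^2 * ((1/(2*ε^(2:ℝ)))^d)^2 := by
      have : (0:ℝ) ≤ ((ε^(3:ℝ))^d)^2 := by positivity
      nlinarith
  _ = ((ε/2) ^ d)^2 := by rw [hsplit]; ring

section Gadget

/-- The 5-cycle, used as a gadget to refute the weak hypothesis when `d < 1/2`. -/
def G5 : SimpleGraph (Fin 5) where
  Adj i j := (j.val = (i.val + 1) % 5) ∨ (i.val = (j.val + 1) % 5)
  symm := by constructor; intro i j h; exact h.symm
  loopless := by constructor; intro i; omega

instance : DecidableRel G5.Adj := fun i j => instDecidableOr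

lemma G5fin4 : ∀ S : Finset (Fin 5), S.card = 4 →
    6 ≤ ((S ×ˢ S).filter (fun p => G5.Adj p.1 p.2)).card ∧
    6 ≤ ((S ×ˢ S).filter (fun p => p.1 ≠ p.2 ∧ ¬ G5.Adj p.1 p.2)).card := by decide

lemma G5fin5 : ∀ S : Finset (Fin 5), S.card = 5 →
    10 ≤ ((S ×ˢ S).filter (fun p => G5.Adj p.1 p.2)).card ∧
    10 ≤ ((S ×ˢ S).filter (fun p => p.1 ≠ p.2 ∧ ¬ G5.Adj p.1 p.2)).card := by decide

lemma ePairs_compl_eq (S : Finset (Fin 5)) :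
    ePairs G5ᶜ (↑S) (↑S) = ((S ×ˢ S).filter (fun p => p.1 ≠ p.2 ∧ ¬ G5.Adj p.1 p.2)).card := by
  rw [ePairs_eq]
  refine congrArg Finset.card (Finset.ext fun p => ?_)
  simp only [Finset.mem_filter, SimpleGraph.compl_adj]

lemma gadget_contra (e : ℝ) (hpos : 0 < e) (hlt : e < 1/2) (S : Finset (Fin 5))
    (hcard : (3.2:ℝ) ≤ (S.card : ℝ))
    (hdisj : (ePairs G5 (↑S) (↑S) : ℝ) ≤ 2*e*(S.card.choose 2) ∨
      (ePairs G5ᶜ (↑S) (↑S) : ℝ) ≤ 2*e*(S.card.choose 2)) : False := by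
  have h4 : 4 ≤ S.card := by
    by_contra h
    push_neg at h
    have : (S.card : ℝ) ≤ 3 := by exact_mod_cast Nat.lt_succ_iff.1 h
    linarith
  have h5 : S.card ≤ 5 := by
    have := Finset.card_le_univ S
    simpa using this
  interval_cases hSc : S.card
  · -- card = 4
    obtain ⟨ha, hb⟩ := G5fin4 S hSc
    have hch : (Nat.choose 4 2 : ℝ) = 6 := by norm_num [Nat.choose]
    rcases hdisj with hle | hle
    · rw [ePairs_eq, Finset.filter_congr_decidable] at hle
      have : (6:ℝ) ≤ ((S ×ˢ S).filter (fun p => G5.Adj p.1 p.2)).card := by exact_mod_cast ha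
      rw [hch] at hle
      linarith
    · rw [ePairs_compl_eq] at hle
      have : (6:ℝ) ≤ ((S ×ˢ S).filter (fun p => p.1 ≠ p.2 ∧ ¬ G5.Adj p.1 p.2)).card := by
        exact_mod_cast hb
      rw [hch] at hle
      linarith
  · -- card = 5
    obtain ⟨ha, hb⟩ := G5fin5 S hSc
    have hch : (Nat.choose 5 2 : ℝ) = 10 := by norm_num [Nat.choose]
    rcases hdisj with hle | hle
    · rw [ePairs_eq, Finset.filter_congr_decidable] at hle
      have : (10:ℝ) ≤ ((S ×ˢ S).filter (fun p => G5.Adj p.1 p.2)).card := by exact_mod_cast ha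
      rw [hch] at hle
      linarith
    · rw [ePairs_compl_eq] at hle
      have : (10:ℝ) ≤ ((S ×ˢ S).filter (fun p => p.1 ≠ p.2 ∧ ¬ G5.Adj p.1 p.2)).card := by
        exact_mod_cast hb
      rw [hch] at hle
      linarith

lemma rho_exists : ∀ x y : Fin 5, ∃ r1 : Fin 5 → Fin 3,
    x ≠ y → Set.InjOn r1 {z | z ≠ x ∧ z ≠ y} := by
  intro x y
  by_cases hxy : x ≠ y
  · have hcard : Fintype.card {z : Fin 5 // z ≠ x ∧ z ≠ y} = 3 := by
      revert hxy; revert y; revert x; decide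
    obtain e := Fintype.equivFinOfCardEq hcard
    refine ⟨fun z => if h : z ≠ x ∧ z ≠ y then e ⟨z, h⟩ else 0, fun _ => ?_⟩
    intro z1 h1 z2 h2 heq
    simp only [Set.mem_setOf_eq] at h1 h2
    simp only [dif_pos h1, dif_pos h2] at heq
    exact congrArg Subtype.val (e.injective heq)
  · exact ⟨fun _ => 0, fun h => absurd h hxy⟩

lemma card_W' {W : Type*} [Fintype W] (a b : W) (hab : a ≠ b) :
    Fintype.card {c : W // c ≠ a ∧ c ≠ b} = Fintype.card W - 2 := by
  rw [Fintype.card_subtype]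
  have : Finset.univ.filter (fun c : W => c ≠ a ∧ c ≠ b)
      = (Finset.univ.erase a).erase b := by
    ext c
    simp [and_comm]
  rw [this, Finset.card_erase_of_mem (Finset.mem_erase.2 ⟨Ne.symm hab, Finset.mem_univ b⟩),
    Finset.card_erase_of_mem (Finset.mem_univ a), Finset.card_univ]
  omega

lemma ind_C5_le {W : Type*} [Fintype W] (H : SimpleGraph W) (h2 : 2 ≤ Fintype.card W) :
    (ind H G5 : ℝ) ≤ (3.2 : ℝ) ^ (Fintype.card W) := by
  obtain ⟨a, b, hab⟩ := Fintype.exists_pair_of_one_lt_card (α := W) (by omega)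
  choose ρ hρ using fun x => rho_exists x
  set P := {p : Fin 5 × Fin 5 // p.1 ≠ p.2 ∧ (G5.Adj p.1 p.2 ↔ H.Adj a b)} with hP
  have hinj : ∃ Φ : {f : W → Fin 5 // IsCopy H G5 f} → P × ({c : W // c ≠ a ∧ c ≠ b} → Fin 3),
      Function.Injective Φ := by
    refine ⟨fun F => ⟨⟨(F.1 a, F.1 b), ⟨F.2.1.ne hab, F.2.2 a b⟩⟩,
      fun c => ρ (F.1 a) (F.1 b) (F.1 c.1)⟩, ?_⟩
    rintro ⟨f, hf⟩ ⟨g, hg⟩ h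
    have h1 : f a = g a := congrArg (fun q => q.1.1.1) h
    have h2 : f b = g b := congrArg (fun q => q.1.1.2) h
    have hsnd := congrArg Prod.snd h
    simp only at hsnd h1 h2
    refine Subtype.ext (funext fun c => ?_)
    by_cases hca : c = a
    · rw [hca]; exact h1
    by_cases hcb : c = b
    · rw [hcb]; exact h2
    have hc := congrFun hsnd ⟨c, hca, hcb⟩
    simp only at hc
    rw [h1, h2] at hc
    exact hρ (g a) (g b) (hg.1.ne hab)
      ⟨by rw [← h1]; exact hf.1.ne hca, by rw [← h2]; exact hf.1.ne hcb⟩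
      ⟨hg.1.ne hca, hg.1.ne hcb⟩ hc
  obtain ⟨Φ, hΦ⟩ := hinj
  have hle1 : ind H G5 ≤ Nat.card (P × ({c : W // c ≠ a ∧ c ≠ b} → Fin 3)) :=
    Nat.card_le_card_of_injective Φ hΦ
  have hcardP : Nat.card P ≤ 10 := by
    by_cases hQ : H.Adj a b
    · have he : ∀ p : Fin 5 × Fin 5,
          (p.1 ≠ p.2 ∧ (G5.Adj p.1 p.2 ↔ H.Adj a b)) ↔ (p.1 ≠ p.2 ∧ G5.Adj p.1 p.2) :=
        fun p => ⟨fun ⟨h1, hiff⟩ => ⟨h1, hiff.2 hQ⟩, fun ⟨h1, ha⟩ => ⟨h1, iff_of_true ha hQ⟩⟩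
      rw [hP, Nat.card_congr (Equiv.subtypeEquivRight he), Nat.card_eq_fintype_card]
      decide
    · have he : ∀ p : Fin 5 × Fin 5,
          (p.1 ≠ p.2 ∧ (G5.Adj p.1 p.2 ↔ H.Adj a b)) ↔ (p.1 ≠ p.2 ∧ ¬ G5.Adj p.1 p.2) :=
        fun p => ⟨fun ⟨h1, hiff⟩ => ⟨h1, fun ha => hQ (hiff.1 ha)⟩,
          fun ⟨h1, hna⟩ => ⟨h1, iff_of_false hna hQ⟩⟩
      rw [hP, Nat.card_congr (Equiv.subtypeEquivRight he), Nat.card_eq_fintype_card]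
      decide
  have hcardF : Nat.card ({c : W // c ≠ a ∧ c ≠ b} → Fin 3) = 3 ^ (Fintype.card W - 2) := by
    rw [Nat.card_eq_fintype_card, Fintype.card_fun, Fintype.card_fin, card_W' a b hab]
  have hprod : Nat.card (P × ({c : W // c ≠ a ∧ c ≠ b} → Fin 3))
      = Nat.card P * Nat.card ({c : W // c ≠ a ∧ c ≠ b} → Fin 3) := Nat.card_prod _ _
  have hnat : ind H G5 ≤ 10 * 3 ^ (Fintype.card W - 2) := by
    calc ind H G5 ≤ _ := hle1
    _ = Nat.card P * Nat.card ({c : W // c ≠ a ∧ c ≠ b} → Fin 3) := hprod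
    _ ≤ 10 * 3 ^ (Fintype.card W - 2) := by
        rw [hcardF]; exact Nat.mul_le_mul_right _ hcardP
  set k := Fintype.card W - 2 with hk
  have hW : Fintype.card W = k + 2 := by omega
  calc (ind H G5 : ℝ) ≤ ((10 * 3 ^ k : ℕ) : ℝ) := by exact_mod_cast hnat
  _ = 10 * (3:ℝ) ^ k := by push_cast; ring
  _ ≤ 10.24 * (3.2:ℝ) ^ k := by
      have h3 : (3:ℝ) ^ k ≤ (3.2:ℝ) ^ k := pow_le_pow_left₀ (by norm_num) (by norm_num) k
      nlinarith [pow_nonneg (by norm_num : (0:ℝ) ≤ 3) k]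
  _ = (3.2:ℝ) ^ (k + 2) := by ring
  _ = (3.2:ℝ) ^ (Fintype.card W) := by rw [hW]

lemma ind_C5_le_zero {W : Type*} [Fintype W] (H : SimpleGraph W) (h0 : Fintype.card W = 0) :
    ind H G5 ≤ 1 := by
  haveI : IsEmpty W := Fintype.card_eq_zero_iff.1 h0
  haveI : Subsingleton {f : W → Fin 5 // IsCopy H G5 f} :=
    ⟨fun F G => Subtype.ext (funext fun c => isEmptyElim c)⟩
  rcases isEmpty_or_nonempty {f : W → Fin 5 // IsCopy H G5 f} with hE | hN
  · rw [ind, Nat.card_of_isEmpty]; omega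
  · rw [ind, Nat.card_eq_one_iff_unique.2 ⟨inferInstance, hN⟩]

end Gadget

lemma ind_card_one {W : Type*} [Fintype W] (H : SimpleGraph W) (h1 : Fintype.card W = 1)
    {n : ℕ} (G : SimpleGraph (Fin n)) : (n : ℕ) ≤ ind H G := by
  haveI hsub : Subsingleton W := Fintype.card_le_one_iff_subsingleton.1 (by omega)
  haveI hne : Nonempty W := Fintype.card_pos_iff.1 (by omega)
  obtain ⟨a0⟩ := hne
  have hcopy : ∀ x : Fin n, IsCopy H G (fun _ => x) := by
    intro x
    constructor
    · intro u v _
      exact Subsingleton.elim u v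
    · intro u v
      have huv : u = v := Subsingleton.elim u v
      subst huv
      exact iff_of_false (G.irrefl) (H.irrefl)
  have hinj : Function.Injective (fun x : Fin n => (⟨fun _ => x, hcopy x⟩ :
      {f : W → Fin n // IsCopy H G f})) := by
    intro x y h
    have := congrArg (fun F => F.1 a0) h
    simpa using this
  calc n = Nat.card (Fin n) := by simp
  _ ≤ Nat.card {f : W → Fin n // IsCopy H G f} := Nat.card_le_card_of_injective _ hinj
  _ = ind H G := rfl

/-- If `d > 0` is a weak viral exponent for `{H}` (for every `ε ∈ (0,1/2)` and graph `G`
with `ind_H(G) ≤ (ε^d|G|)^{|H|}` there is `S` with `|S| ≥ ε^d|G|` such that one of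
`G[S]`, its complement, has at most `ε·(|S| choose 2)` edges), then `3d` is a viral
exponent for `{H}`. -/
theorem stmt_4 {W : Type*} [Fintype W] (H : SimpleGraph W) (d : ℝ) (hd : 0 < d)
    (hweak : ∀ (n : ℕ) (G : SimpleGraph (Fin n)) (ε : ℝ), 0 < ε → ε < 1/2 →
      (ind H G : ℝ) ≤ (ε ^ d * n) ^ (Fintype.card W) →
      ∃ S : Finset (Fin n), ε ^ d * n ≤ (S.card : ℝ) ∧
        ((ePairs G (↑S) (↑S) : ℝ) ≤ 2 * ε * (S.card.choose 2) ∨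
         (ePairs Gᶜ (↑S) (↑S) : ℝ) ≤ 2 * ε * (S.card.choose 2))) :
    ∀ (n : ℕ) (G : SimpleGraph (Fin n)) (ε : ℝ), 0 < ε → ε < 1/2 →
      (ind H G : ℝ) ≤ (ε ^ (3 * d) * n) ^ (Fintype.card W) →
      ∃ S : Finset (Fin n), ε ^ (3 * d) * n ≤ (S.card : ℝ) ∧ EpsRestricted G S ε := by
  intro n G ε hε hε2 hind
  rcases le_or_gt (1/2 : ℝ) d with hdbig | hdsmall
  · -- main case : d ≥ 1/2.  Apply the weak hypothesis with ε/2 and trim greedily.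
    have hhalfpos : 0 < ε/2 := by linarith
    have hhalflt : ε/2 < 1/2 := by linarith
    have hmono : ε ^ (3*d) ≤ (ε/2) ^ d := by
      have h3 : ε ^ (3*d) = (ε^(3:ℝ))^d := by rw [← Real.rpow_mul hε.le]
      rw [h3]
      apply Real.rpow_le_rpow (by positivity) _ hd.le
      rw [show (3:ℝ) = ((3:ℕ):ℝ) by norm_num, Real.rpow_natCast]
      have hsq : ε^2 < 1/4 := by nlinarith
      nlinarith [mul_lt_mul_of_pos_left hsq hε]
    have hind' : (ind H G : ℝ) ≤ ((ε/2) ^ d * n) ^ (Fintype.card W) := by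
      refine hind.trans (pow_le_pow_left₀ ?_ ?_ _)
      · positivity
      · have : (0:ℝ) ≤ (n:ℝ) := Nat.cast_nonneg n
        nlinarith
    obtain ⟨S₀, hS₀card, hS₀disj⟩ := hweak n G (ε/2) hhalfpos hhalflt hind'
    -- a helper applying the greedy trim to a graph G' (either G or Gᶜ)
    have main : ∀ G' : SimpleGraph (Fin n),
        (ePairs G' (↑S₀) (↑S₀) : ℝ) ≤ 2 * (ε/2) * (S₀.card.choose 2) →
        ∃ T, T ⊆ S₀ ∧ ε ^ (3*d) * n ≤ (T.card : ℝ) ∧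
          (∀ v ∈ T, (degIn G' (↑T) v : ℝ) ≤ ε * T.card) := by
      intro G' hsp
      obtain ⟨T, hTsub, hTgood, hTineq⟩ := greedy G' ε hε.le S₀
      refine ⟨T, hTsub, ?_, hTgood⟩
      have hchoose : ((S₀.card.choose 2 : ℕ) : ℝ) = S₀.card * ((S₀.card : ℝ) - 1) / 2 := by
        rw [Nat.cast_choose_two]
      have hm0 : (0:ℝ) ≤ (S₀.card : ℝ) := Nat.cast_nonneg _
      have hbound : (ePairs G' (↑S₀) (↑S₀) : ℝ) ≤ ε * ((S₀.card:ℝ)^2 / 2) := by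
        rw [hchoose] at hsp
        calc (ePairs G' (↑S₀) (↑S₀) : ℝ)
            ≤ 2 * (ε/2) * ((S₀.card:ℝ) * ((S₀.card:ℝ)-1) / 2) := hsp
        _ = ε * ((S₀.card:ℝ) * ((S₀.card:ℝ)-1) / 2) := by ring
        _ ≤ ε * ((S₀.card:ℝ)^2 / 2) := by
            refine mul_le_mul_of_nonneg_left ?_ hε.le
            nlinarith
      have hfrac : ((S₀.card:ℝ)^2) / 2 ≤ (T.card : ℝ)^2 := by
        have hchain : ε * ((S₀.card : ℝ)^2 - (T.card : ℝ)^2) ≤ ε * ((S₀.card:ℝ)^2 / 2) :=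
          hTineq.trans hbound
        have := le_of_mul_le_mul_left hchain hε
        linarith
      have hkey := key_ineq ε d hε hε2 hdbig
      have hnn2 : (0:ℝ) ≤ ((n:ℝ))^2 := sq_nonneg _
      have hq1 : (ε ^ (3*d) * n)^2 ≤ ((ε/2)^d * n)^2 / 2 := by
        have expand1 : (ε ^ (3*d) * (n:ℝ))^2 = (ε ^ (3*d))^2 * (n:ℝ)^2 := by ring
        have expand2 : ((ε/2)^d * (n:ℝ))^2 = ((ε/2)^d)^2 * (n:ℝ)^2 := by ring
        rw [expand1, expand2]
        have := mul_le_mul_of_nonneg_right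
          (by linarith : (ε ^ (3*d))^2 ≤ ((ε/2)^d)^2 / 2) hnn2
        linarith
      have hq2 : ((ε/2)^d * n)^2 ≤ ((S₀.card : ℝ))^2 := by
        have h0 : (0:ℝ) ≤ (ε/2)^d * n := by positivity
        exact pow_le_pow_left₀ h0 hS₀card 2
      have hfinal : (ε ^ (3*d) * n)^2 ≤ ((T.card : ℝ))^2 := by linarith
      have h0l : (0:ℝ) ≤ ε ^ (3*d) * n := by positivity
      have h0r : (0:ℝ) ≤ (T.card : ℝ) := Nat.cast_nonneg _
      exact (pow_le_pow_iff_left₀ h0l h0r (by norm_num)).1 hfinal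
    rcases hS₀disj with hsp | hsp
    · obtain ⟨T, _, hTcard, hTdeg⟩ := main G hsp
      exact ⟨T, hTcard, Or.inl hTdeg⟩
    · obtain ⟨T, _, hTcard, hTdeg⟩ := main Gᶜ hsp
      exact ⟨T, hTcard, Or.inr hTdeg⟩
  · -- degenerate case : d < 1/2.  The weak hypothesis is contradictory unless |W| = 1.
    rcases Nat.lt_or_ge (Fintype.card W) 2 with hWsmall | hWbig
    · interval_cases hW : Fintype.card W
      · -- |W| = 0 : refute hweak with the 5-cycle
        exfalso
        set e : ℝ := (0.64 : ℝ) ^ (1/d) with he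
        have hepos : 0 < e := Real.rpow_pos_of_pos (by norm_num) _
        have helt : e < 1/2 := by
          have h1 : e ≤ (0.64:ℝ) ^ (2:ℝ) := by
            apply Real.rpow_le_rpow_of_exponent_ge (by norm_num) (by norm_num)
            rw [le_div_iff₀ hd]
            linarith
          have h2 : (0.64:ℝ) ^ (2:ℝ) = 0.4096 := by
            rw [show (2:ℝ) = ((2:ℕ):ℝ) by norm_num, Real.rpow_natCast]
            norm_num
          linarith [h1, h2]
        have hed : e ^ d = 0.64 := by
          rw [he, ← Real.rpow_mul (by norm_num), one_div, inv_mul_cancel₀ hd.ne',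
            Real.rpow_one]
        have hhyp : (ind H G5 : ℝ) ≤ (e ^ d * (5:ℕ)) ^ (0:ℕ) := by
          rw [pow_zero]
          exact_mod_cast ind_C5_le_zero H hW
        obtain ⟨S, hScard, hSdisj⟩ := hweak 5 G5 e hepos helt hhyp
        rw [hed] at hScard
        have : (3.2:ℝ) ≤ (S.card : ℝ) := by
          refine le_trans (by norm_num) hScard
        exact gadget_contra e hepos helt S this hSdisj
      · -- |W| = 1 : the hypothesis forces n = 0
        have hIle : (n : ℝ) ≤ (ind H G : ℝ) := by exact_mod_cast ind_card_one H hW G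
        have hlt1 : ε ^ (3*d) < 1 := by
          apply Real.rpow_lt_one hε.le (by linarith)
          linarith
        have hn0 : n = 0 := by
          by_contra hne
          have hnpos : (1:ℝ) ≤ (n:ℝ) := by exact_mod_cast Nat.one_le_iff_ne_zero.2 hne
          have : (ind H G : ℝ) ≤ ε ^ (3*d) * n := by
            rw [pow_one] at hind
            exact hind
          nlinarith
        refine ⟨∅, ?_, Or.inl (by intro v hv; simp at hv)⟩
        simp [hn0]
    · -- |W| ≥ 2 : refute hweak with the 5-cycle
      exfalso
      set e : ℝ := (0.64 : ℝ) ^ (1/d) with he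
      have hepos : 0 < e := Real.rpow_pos_of_pos (by norm_num) _
      have helt : e < 1/2 := by
        have h1 : e ≤ (0.64:ℝ) ^ (2:ℝ) := by
          apply Real.rpow_le_rpow_of_exponent_ge (by norm_num) (by norm_num)
          rw [le_div_iff₀ hd]
          linarith
        have h2 : (0.64:ℝ) ^ (2:ℝ) = 0.4096 := by
          rw [show (2:ℝ) = ((2:ℕ):ℝ) by norm_num, Real.rpow_natCast]
          norm_num
        linarith [h1, h2]
      have hed : e ^ d = 0.64 := by
        rw [he, ← Real.rpow_mul (by norm_num), one_div, inv_mul_cancel₀ hd.ne',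
          Real.rpow_one]
      have hhyp : (ind H G5 : ℝ) ≤ (e ^ d * (5:ℕ)) ^ (Fintype.card W) := by
        rw [hed]
        have : ((0.64:ℝ) * (5:ℕ)) = 3.2 := by norm_num
        rw [this]
        exact ind_C5_le H hWbig
      obtain ⟨S, hScard, hSdisj⟩ := hweak 5 G5 e hepos helt hhyp
      rw [hed] at hScard
      have : (3.2:ℝ) ≤ (S.card : ℝ) := by
        refine le_trans (by norm_num) hScard
      exact gadget_contra e hepos helt S this hSdisj
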